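/- Let f: ℝ → ℝ be a nonnegative differentiable function whose derivative is H-Lipschitz (H-smooth). Then for all t, r ∈ ℝ, (f(t) - f(r))² ≤ 6H (f(t) + f(r)) (t - r)². -/

import Mathlib

set_option maxHeartbeats 1000000

/-- Mean value theorem giving a point `c` with distance bounds to both endpoints. -/
lemma mvt_aux (f : ℝ → ℝ) (hdiff : Differentiable ℝ f) (x y : ℝ) :
    ∃ c : ℝ, |c - x| ≤ |y - x| ∧ |c - y| ≤ |y - x| ∧
      f y - f x = deriv f c * (y - x) := by
  rcases lt_trichotomy x y with h | h | h
  · obtain ⟨c, hc, hc'⟩ := exists_hasDerivAt_eq_slope f (deriv f) h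
      (hdiff.continuous.continuousOn) (fun z _ => (hdiff z).hasDerivAt)
    refine ⟨c, ?_, ?_, ?_⟩
    · rw [abs_of_pos (sub_pos.mpr hc.1), abs_of_pos (sub_pos.mpr h)]
      linarith [hc.2]
    · rw [abs_of_neg (sub_neg.mpr hc.2), abs_of_pos (sub_pos.mpr h)]
      linarith [hc.1]
    · field_simp [sub_ne_zero.mpr h.ne'] at hc'
      linarith [hc']
  · exact ⟨x, by simp [h], by simp [h], by simp [h]⟩
  · obtain ⟨c, hc, hc'⟩ := exists_hasDerivAt_eq_slope f (deriv f) h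
      (hdiff.continuous.continuousOn) (fun z _ => (hdiff z).hasDerivAt)
    refine ⟨c, ?_, ?_, ?_⟩
    · rw [abs_of_neg (sub_neg.mpr hc.2), abs_of_neg (sub_neg.mpr h)]
      linarith [hc.1]
    · rw [abs_of_pos (sub_pos.mpr hc.1), abs_of_neg (sub_neg.mpr h)]
      linarith [hc.2]
    · field_simp [sub_ne_zero.mpr h.ne'] at hc'
      linarith [hc']

/-- Descent lemma with constant `H` (instead of the sharp `H/2`). -/
lemma descent_aux (f : ℝ → ℝ) (H : ℝ) (hdiff : Differentiable ℝ f)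
    (hsmooth : ∀ t r : ℝ, |deriv f t - deriv f r| ≤ H * |t - r|) (x y : ℝ) :
    f y ≤ f x + deriv f x * (y - x) + H * (y - x) ^ 2 := by
  have hH : 0 ≤ H := by
    have h1 := hsmooth 1 0
    have h2 : (0:ℝ) ≤ |deriv f 1 - deriv f 0| := abs_nonneg _
    simp at h1
    linarith
  obtain ⟨c, hc1, _, hc3⟩ := mvt_aux f hdiff x y
  have key : (deriv f c - deriv f x) * (y - x) ≤ H * (y - x) ^ 2 := by
    calc (deriv f c - deriv f x) * (y - x)
        ≤ |(deriv f c - deriv f x) * (y - x)| := le_abs_self _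
      _ = |deriv f c - deriv f x| * |y - x| := abs_mul _ _
      _ ≤ (H * |c - x|) * |y - x| :=
          mul_le_mul_of_nonneg_right (hsmooth c x) (abs_nonneg _)
      _ ≤ (H * |y - x|) * |y - x| :=
          mul_le_mul_of_nonneg_right (mul_le_mul_of_nonneg_left hc1 hH) (abs_nonneg _)
      _ = H * (y - x) ^ 2 := by rw [mul_assoc, ← abs_mul, ← sq, abs_sq]
  nlinarith [hc3, key]

/-- Gradient self-bound: `(f'(x))² ≤ 4 H f(x)` for nonnegative `H`-smooth `f` (with `H > 0`). -/
lemma grad_bound_aux (f : ℝ → ℝ) (H : ℝ) (hdiff : Differentiable ℝ f)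
    (hpos : ∀ x, 0 ≤ f x)
    (hsmooth : ∀ t r : ℝ, |deriv f t - deriv f r| ≤ H * |t - r|)
    (hH : 0 < H) (x : ℝ) :
    (deriv f x) ^ 2 ≤ 4 * H * f x := by
  set s : ℝ := deriv f x / (2 * H) with hs
  have hD : deriv f x = 2 * H * s := by
    rw [hs, mul_div_assoc', eq_div_iff (by positivity)]; ring
  have hd := descent_aux f H hdiff hsmooth x (x - s)
  have hp := hpos (x - s)
  have hyx : (x - s) - x = -s := by ring
  rw [hyx] at hd
  nlinarith [hd, hp, sq_nonneg s]

/-- Self-bounding property of smooth nonnegative scalar functions: if `f : ℝ → ℝ` is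
nonnegative and differentiable with `H`-Lipschitz derivative, then
`(f(t) - f(r))² ≤ 6H (f(t) + f(r)) (t - r)²`. -/
theorem smooth_nonneg_self_bounding (f : ℝ → ℝ) (H : ℝ)
    (hdiff : Differentiable ℝ f) (hpos : ∀ x, 0 ≤ f x)
    (hsmooth : ∀ t r : ℝ, |deriv f t - deriv f r| ≤ H * |t - r|) :
    ∀ t r : ℝ, (f t - f r) ^ 2 ≤ 6 * H * (f t + f r) * (t - r) ^ 2 := by
  have hH : 0 ≤ H := by
    have h1 := hsmooth 1 0
    have h2 : (0:ℝ) ≤ |deriv f 1 - deriv f 0| := abs_nonneg _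
    simp at h1
    linarith
  intro t r
  rcases eq_or_lt_of_le hH with hH0 | hHpos
  · -- H = 0 : f is constant
    have hderiv0 : ∀ x : ℝ, deriv f x = 0 := by
      intro x
      by_contra hne
      set D := deriv f x with hD
      have hd := descent_aux f H hdiff hsmooth x (x - (f x + 1) / D)
      have hp := hpos (x - (f x + 1) / D)
      rw [← hH0] at hd
      have hyx : D * ((x - (f x + 1) / D) - x) = -(f x + 1) := by
        field_simp
        ring
      nlinarith [hd, hp, hyx]
    have hconst : ∀ x y : ℝ, f y ≤ f x := by
      intro x y
      have hd := descent_aux f H hdiff hsmooth x y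
      rw [← hH0, hderiv0] at hd
      linarith
    have : f t = f r := le_antisymm (hconst r t) (hconst t r)
    rw [this, ← hH0]
    ring_nf
    nlinarith [sq_nonneg (t - r)]
  · -- H > 0
    obtain ⟨c, hc1, hc2, hc3⟩ := mvt_aux f hdiff r t
    have hsq1 : (c - r) ^ 2 ≤ (t - r) ^ 2 := by
      rw [← sq_abs (c - r), ← sq_abs (t - r)]
      exact pow_le_pow_left₀ (abs_nonneg _) hc1 2
    have hsq2 : (c - t) ^ 2 ≤ (t - r) ^ 2 := by
      rw [← sq_abs (c - t), ← sq_abs (t - r)]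
      exact pow_le_pow_left₀ (abs_nonneg _) hc2 2
    have hBc := grad_bound_aux f H hdiff hpos hsmooth hHpos c
    have hBr := grad_bound_aux f H hdiff hpos hsmooth hHpos r
    have hBt := grad_bound_aux f H hdiff hpos hsmooth hHpos t
    have hdr := descent_aux f H hdiff hsmooth r c
    have hdt := descent_aux f H hdiff hsmooth t c
    -- AM-GM steps
    have hamr : deriv f r * (c - r) ≤ f r + H * (c - r) ^ 2 := by
      nlinarith [hBr, sq_nonneg (f r - H * (c - r) ^ 2), hpos r, sq_nonneg (c - r),
        mul_nonneg hH (sq_nonneg (c - r)), sq_nonneg (deriv f r * (c - r))]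
    have hamt : deriv f t * (c - t) ≤ f t + H * (c - t) ^ 2 := by
      nlinarith [hBt, sq_nonneg (f t - H * (c - t) ^ 2), hpos t, sq_nonneg (c - t),
        mul_nonneg hH (sq_nonneg (c - t)), sq_nonneg (deriv f t * (c - t))]
    have hfcr : f c ≤ 2 * f r + 2 * H * (t - r) ^ 2 := by nlinarith [hdr, hamr, hsq1]
    have hfct : f c ≤ 2 * f t + 2 * H * (t - r) ^ 2 := by nlinarith [hdt, hamt, hsq2]
    have hfc : f c ≤ (f t + f r) + 2 * H * (t - r) ^ 2 := by linarith
    have heq2 : (f t - f r) ^ 2 = (deriv f c) ^ 2 * (t - r) ^ 2 := by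
      rw [hc3]; ring
    by_cases hcase : H * (t - r) ^ 2 ≤ (f t + f r) / 4
    · have e1 : (f t - f r) ^ 2 ≤ 4 * H * f c * (t - r) ^ 2 := by
        rw [heq2]
        exact mul_le_mul_of_nonneg_right hBc (sq_nonneg _)
      have e2 : 4 * H * f c * (t - r) ^ 2
          ≤ 4 * H * ((f t + f r) + 2 * H * (t - r) ^ 2) * (t - r) ^ 2 := by
        have : 4 * H * f c ≤ 4 * H * ((f t + f r) + 2 * H * (t - r) ^ 2) := by
          nlinarith [hfc, hH]
        exact mul_le_mul_of_nonneg_right this (sq_nonneg _)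
      have e3 : (8 * H * (t - r) ^ 2) * (H * (t - r) ^ 2)
          ≤ (8 * H * (t - r) ^ 2) * ((f t + f r) / 4) :=
        mul_le_mul_of_nonneg_left hcase
          (mul_nonneg (mul_nonneg (by norm_num) hH) (sq_nonneg _))
      linarith [e1, e2, e3]
    · push_neg at hcase
      have s1 : (f t - f r) ^ 2 ≤ (f t + f r) ^ 2 := by
        nlinarith [mul_nonneg (hpos t) (hpos r)]
      have s2 : (f t + f r) ^ 2 ≤ (f t + f r) * (4 * H * (t - r) ^ 2) := by
        have h4 : f t + f r ≤ 4 * H * (t - r) ^ 2 := by linarith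
        nlinarith [h4, add_nonneg (hpos t) (hpos r)]
      have s3 : 0 ≤ 2 * H * (f t + f r) * (t - r) ^ 2 :=
        mul_nonneg (mul_nonneg (mul_nonneg (by norm_num) hH)
          (add_nonneg (hpos t) (hpos r))) (sq_nonneg _)
      linarith [s1, s2, s3]
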